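/- Every topologically finitely generated profinite group is Hopfian: if G is a compact, Hausdorff, totally disconnected topological group such that there is a finite subset whose generated subgroup is dense in G, then every continuous surjective group homomorphism φ : G → G is injective. -/

import Mathlib

/-- Every topologically finitely generated profinite group is Hopfian:
if `G` is a compact, Hausdorff, totally disconnected topological group with a finite
subset generating a dense subgroup, then every continuous surjective homomorphism
`φ : G → G` is injective. -/
theorem stmt_16 {G : Type*} [Group G] [TopologicalSpace G] [IsTopologicalGroup G]
    [CompactSpace G] [T2Space G] [TotallyDisconnectedSpace G]
    (hfg : ∃ T : Finset G, Dense ((Subgroup.closure (T : Set G) : Subgroup G) : Set G))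
    (φ : G →* G) (hcont : Continuous φ) (hsurj : Function.Surjective φ) :
    Function.Injective φ := by
  obtain ⟨T, hT⟩ := hfg
  rw [← MonoidHom.ker_eq_bot_iff]
  by_contra hker
  obtain ⟨x, hxker, hx1⟩ := (Subgroup.bot_or_exists_ne_one _).resolve_left hker
  -- find a clopen neighborhood of 1 not containing x
  obtain ⟨W, hW, h1W, hxW⟩ :=
    exists_isClopen_of_totally_separated (show (1 : G) ≠ x from fun h => hx1 h.symm)
  obtain ⟨N, hN⟩ := IsTopologicalGroup.exist_openNormalSubgroup_sub_clopen_nhds_of_one hW h1W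
  have hxN : x ∉ (N : Subgroup G) := fun h => hxW (hN h)
  set Q := G ⧸ (N : Subgroup G) with hQ
  haveI : DiscreteTopology Q := QuotientGroup.discreteTopology N.toOpenSubgroup.isOpen
  haveI : Finite Q := Subgroup.quotient_finite_of_isOpen _ N.toOpenSubgroup.isOpen
  -- the set of continuous homs G →* Q is finite
  haveI : Finite {ψ : G →* Q // Continuous ψ} := by
    apply Finite.of_injective (fun ψ : {ψ : G →* Q // Continuous ψ} => fun t : T => ψ.1 t)
    intro ψ₁ ψ₂ h
    have heq : Set.EqOn ψ₁.1 ψ₂.1 ((Subgroup.closure (T : Set G) : Subgroup G) : Set G) :=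
      MonoidHom.eqOn_closure fun t ht => congrFun h ⟨t, ht⟩
    have : (ψ₁.1 : G → Q) = ψ₂.1 := Continuous.ext_on hT ψ₁.2 ψ₂.2 heq
    exact Subtype.ext (MonoidHom.ext fun g => congrFun this g)
  -- precomposition with φ is injective, hence surjective
  have hinj : Function.Injective
      (fun ψ : {ψ : G →* Q // Continuous ψ} => (⟨ψ.1.comp φ, ψ.2.comp hcont⟩ :
        {ψ : G →* Q // Continuous ψ})) := by
    intro ψ₁ ψ₂ h
    refine Subtype.ext (MonoidHom.ext fun g => ?_)
    obtain ⟨g', rfl⟩ := hsurj g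
    exact DFunLike.congr_fun (congrArg Subtype.val h) g'
  have hsurj' := Finite.surjective_of_injective hinj
  -- apply to the quotient map
  obtain ⟨ψ, hψ⟩ := hsurj' ⟨QuotientGroup.mk' (N : Subgroup G), continuous_quotient_mk'⟩
  have : QuotientGroup.mk' (N : Subgroup G) x = 1 := by
    have h1 : ψ.1.comp φ = QuotientGroup.mk' (N : Subgroup G) := congrArg Subtype.val hψ
    calc QuotientGroup.mk' (N : Subgroup G) x = ψ.1 (φ x) := by rw [← h1]; rfl
      _ = ψ.1 1 := by rw [MonoidHom.mem_ker.mp hxker]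
      _ = 1 := ψ.1.map_one
  exact hxN ((QuotientGroup.eq_one_iff x).mp this)
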